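/- Let K be a convex body in ℝⁿ, x ∈ int K, and y ∈ ℝⁿ \ {0}. Then the supremum defining b*_K(x,y) is attained: there exists a ∈ ℝⁿ such that the ellipse with parameters (a, b*_K(x,y)) through x in direction y is inscribed in K. -/

import Mathlib

/-- A convex body in ℝⁿ: a compact convex set with nonempty interior. -/
def IsConvexBody {n : ℕ} (K : Set (EuclideanSpace ℝ (Fin n))) : Prop :=
  IsCompact K ∧ Convex ℝ K ∧ (interior K).Nonempty

/-- The ellipse with parameters `(a, b)` through `x` in direction `y`,
`θ ↦ (cos θ)•a + b(sin θ)•y + (x - a)`, is inscribed in `K`. -/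
def InscribedEllipse {n : ℕ} (K : Set (EuclideanSpace ℝ (Fin n)))
    (x y a : EuclideanSpace ℝ (Fin n)) (b : ℝ) : Prop :=
  ∀ θ : ℝ, (Real.cos θ) • a + (b * Real.sin θ) • y + (x - a) ∈ K

/-- `b*_K(x,y)`: the supremum of `b > 0` such that some ellipse with parameters
`(a,b)` through `x` in direction `y` is inscribed in `K`. -/
noncomputable def bStar {n : ℕ} (K : Set (EuclideanSpace ℝ (Fin n)))
    (x y : EuclideanSpace ℝ (Fin n)) : ℝ :=
  sSup { b : ℝ | 0 < b ∧ ∃ a, InscribedEllipse K x y a b }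

/-- The supremum defining b*_K(x,y) is attained: a b-maximal ellipse exists. -/
theorem stmt_9 {n : ℕ} (hn : 1 ≤ n) (K : Set (EuclideanSpace ℝ (Fin n)))
    (hK : IsConvexBody K) (x y : EuclideanSpace ℝ (Fin n))
    (hx : x ∈ interior K) (hy : y ≠ 0) :
    ∃ a : EuclideanSpace ℝ (Fin n), InscribedEllipse K x y a (bStar K x y) := by
  obtain ⟨hKc, hKconv, -⟩ := hK
  set S : Set ℝ := { b : ℝ | 0 < b ∧ ∃ a, InscribedEllipse K x y a b } with hS
  have hyn : 0 < ‖y‖ := norm_pos_iff.mpr hy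
  -- S is nonempty
  obtain ⟨ε, hε, hball⟩ : ∃ ε > 0, Metric.ball x ε ⊆ K := by
    rcases Metric.mem_nhds_iff.mp (mem_interior_iff_mem_nhds.mp hx) with ⟨ε, hε, h⟩
    exact ⟨ε, hε, h⟩
  have hSne : S.Nonempty := by
    refine ⟨ε / (2 * ‖y‖), by positivity, 0, fun θ => ?_⟩
    apply hball
    simp only [smul_zero, sub_zero, zero_add]
    rw [Metric.mem_ball, dist_eq_norm, add_sub_cancel_right, norm_smul]
    calc |ε / (2 * ‖y‖) * Real.sin θ| * ‖y‖
        ≤ (ε / (2 * ‖y‖) * 1) * ‖y‖ := by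
          apply mul_le_mul_of_nonneg_right _ (norm_nonneg y)
          rw [abs_mul, abs_of_pos (by positivity : (0:ℝ) < ε / (2 * ‖y‖))]
          exact mul_le_mul_of_nonneg_left (Real.abs_sin_le_one θ) (by positivity)
      _ = ε / 2 := by field_simp
      _ < ε := by linarith
  -- S is bounded above
  obtain ⟨R, hR⟩ : ∃ R : ℝ, ∀ p ∈ K, ‖p‖ ≤ R :=
    hKc.isBounded.exists_norm_le
  have hSbdd : BddAbove S := by
    refine ⟨R / ‖y‖, fun b hb => ?_⟩
    obtain ⟨hb0, a, ha⟩ := hb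
    have h1 := ha (Real.pi / 2)
    have h2 := ha (-(Real.pi / 2))
    simp [Real.cos_pi_div_two, Real.sin_pi_div_two] at h1 h2
    have key : ‖(2 * b) • y‖ ≤ 2 * R := by
      have : (2 * b) • y = (b • y + (x - a)) - (-(b • y) + (x - a)) := by
        module
      rw [this]
      calc ‖(b • y + (x - a)) - (-(b • y) + (x - a))‖
          ≤ ‖b • y + (x - a)‖ + ‖-(b • y) + (x - a)‖ := norm_sub_le _ _
        _ ≤ R + R := add_le_add (hR _ h1) (hR _ h2)
        _ = 2 * R := by ring
    rw [norm_smul, Real.norm_eq_abs, abs_of_pos (by positivity)] at key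
    rw [le_div_iff₀ hyn]
    nlinarith
  -- approximating sequence
  obtain ⟨u, -, hu_tend, hu_mem⟩ := exists_seq_tendsto_sSup hSne hSbdd
  choose aseq haseq using fun k => (hu_mem k).2
  -- aseq lies in a compact set
  have hTc : IsCompact ((fun p => (2⁻¹ : ℝ) • (x - p)) '' K) :=
    hKc.image (by fun_prop)
  have hmem : ∀ k, aseq k ∈ (fun p => (2⁻¹ : ℝ) • (x - p)) '' K := by
    intro k
    have h := haseq k Real.pi
    simp [Real.cos_pi, Real.sin_pi] at h
    have h' : x - (2:ℝ) • aseq k ∈ K := by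
      have : x - (2:ℝ) • aseq k = -aseq k + (x - aseq k) := by module
      rw [this]; exact h
    exact ⟨x - (2:ℝ) • aseq k, h', by module⟩
  obtain ⟨a, -, φ, hφ, ha_tend⟩ := hTc.tendsto_subseq hmem
  refine ⟨a, fun θ => ?_⟩
  have hb_tend : Filter.Tendsto (fun k => u (φ k)) Filter.atTop (nhds (sSup S)) :=
    hu_tend.comp hφ.tendsto_atTop
  have hpt : Filter.Tendsto
      (fun k => (Real.cos θ) • aseq (φ k) + (u (φ k) * Real.sin θ) • y + (x - aseq (φ k)))
      Filter.atTop
      (nhds ((Real.cos θ) • a + (sSup S * Real.sin θ) • y + (x - a))) := by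
    exact ((ha_tend.const_smul (Real.cos θ)).add
      ((hb_tend.mul_const (Real.sin θ)).smul_const y)).add
      (tendsto_const_nhds.sub ha_tend)
  exact hKc.isClosed.mem_of_tendsto hpt
    (Filter.Eventually.of_forall fun k => haseq (φ k) θ)
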